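/- If C is a finite subset of L_{W,R',I'}(S) consistent with AX*_{basic,A}(S, W, R', I'), ⟨Y ← y⟩φ ∈ C with φ a conjunctive formula, and X ∈ W, then there exists a formula ψ ∈ L_{W,R',I'}(S) not in C such that C ∪ {ψ} is consistent with AX*_{basic,A}(S, W, R', I') and is acceptable for ⟨Y ← y⟩φ with respect to X. -/

import Mathlib

namespace Causal

/-- A signature: exogenous variables `U`, endogenous variables `V`, a universe
of values `Val`, range functions `RU`, `RV`, and a set `Int` of allowed
interventions (partial assignments of in-range values to endogenous variables). -/
structure Signature : Type 1 where
  U : Type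
  V : Type
  Val : Type
  RU : U → Set Val
  RV : V → Set Val
  RU_nonempty : ∀ Y, (RU Y).Nonempty
  RV_nonempty : ∀ X, (RV X).Nonempty
  Int : Set (V → Option Val)
  Int_ok : ∀ I ∈ Int, ∀ X x, I X = some x → x ∈ RV X

variable {S : Signature}

/-- A finite signature: finitely many variables, each with finite range. -/
def Signature.IsFinite (S : Signature) : Prop :=
  Finite S.U ∧ Finite S.V ∧ (∀ Y, (S.RU Y).Finite) ∧ (∀ X, (S.RV X).Finite)

/-- An intervention is valid if it only sets variables to values in their ranges. -/
def ValidInt (S : Signature) (I : S.V → Option S.Val) : Prop :=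
  ∀ X x, I X = some x → x ∈ S.RV X

/-- A universal signature: all (valid) interventions are allowed. -/
def Signature.Universal (S : Signature) : Prop :=
  S.Int = {I | ValidInt S I}

/-- A context: an assignment of in-range values to the exogenous variables. -/
def Context (S : Signature) : Type := {u : S.U → S.Val // ∀ Y, u Y ∈ S.RU Y}

/-- An assignment of in-range values to the endogenous variables (an outcome). -/
def Assignment (S : Signature) : Type := {v : S.V → S.Val // ∀ X, v X ∈ S.RV X}

open Classical in
/-- `updInt I X x` is the intervention `I; X ← x`. -/
noncomputable def updInt (I : S.V → Option S.Val) (X : S.V) (x : S.Val) :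
    S.V → Option S.Val :=
  fun Y => if Y = X then some x else I Y

/-- Events: Boolean combinations of primitive events `X = x` (with `x ∈ R(X)`). -/
inductive Event (S : Signature) : Type where
  | tru : Event S
  | prim : (X : S.V) → (x : S.Val) → x ∈ S.RV X → Event S
  | not : Event S → Event S
  | and : Event S → Event S → Event S
  | or : Event S → Event S → Event S

namespace Event

def imp (a b : Event S) : Event S := Event.or (Event.not a) b

/-- Satisfaction of an event by an assignment. -/
def sat (v : Assignment S) : Event S → Prop
  | .tru => True
  | .prim X x _ => v.1 X = x
  | .not e => ¬ Event.sat v e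
  | .and a b => Event.sat v a ∧ Event.sat v b
  | .or a b => Event.sat v a ∨ Event.sat v b

/-- Boolean evaluation of an event under an arbitrary valuation of its atoms;
used to define propositional tautologies. -/
def evalB (val : S.V → S.Val → Bool) : Event S → Bool
  | .tru => true
  | .prim X x _ => val X x
  | .not e => !(Event.evalB val e)
  | .and a b => Event.evalB val a && Event.evalB val b
  | .or a b => Event.evalB val a || Event.evalB val b

/-- An event is a propositional tautology if it is true under every Boolean
valuation of its primitive events. -/
def Taut (e : Event S) : Prop := ∀ val, Event.evalB val e = true

/-- The value `x` of variable `X` is mentioned in the event. -/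
def mentionsVal (X : S.V) (x : S.Val) : Event S → Prop
  | .tru => False
  | .prim X' x' _ => X' = X ∧ x' = x
  | .not e => Event.mentionsVal X x e
  | .and a b => Event.mentionsVal X x a ∨ Event.mentionsVal X x b
  | .or a b => Event.mentionsVal X x a ∨ Event.mentionsVal X x b

def bigAnd (l : List (Event S)) : Event S := l.foldr Event.and Event.tru

def bigOr (l : List (Event S)) : Event S := l.foldr Event.or (Event.not Event.tru)

/-- The disjunction `⋁_{x ∈ l} X = x`. -/
def disjEq (X : S.V) (l : List {x : S.Val // x ∈ S.RV X}) : Event S :=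
  bigOr (l.map fun x => Event.prim X x.1 x.2)

/-- The conjunction `⋀ X = x` over a list of (variable, value) pairs. -/
def conjEqL (l : List ((X : S.V) × {x : S.Val // x ∈ S.RV X})) : Event S :=
  bigAnd (l.map fun p => Event.prim p.1 p.2.1 p.2.2)

/-- Conjunctive formulas: conjunctions of literals `X = x` and `X ≠ x`. -/
inductive Conjunctive : Event S → Prop
  | tru : Conjunctive Event.tru
  | eq (X x hx) : Conjunctive (Event.prim X x hx)
  | ne (X x hx) : Conjunctive (Event.not (Event.prim X x hx))
  | and {a b} : Conjunctive a → Conjunctive b → Conjunctive (Event.and a b)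

/-- The set of conjuncts of a (conjunctive) formula. -/
def conjuncts : Event S → Set (Event S)
  | .tru => ∅
  | .and a b => Event.conjuncts a ∪ Event.conjuncts b
  | e => {e}

/-- Membership in the restricted language: only named variables and named values. -/
def InLang (W : Set S.V) (R' : S.V → Set S.Val) : Event S → Prop
  | .tru => True
  | .prim X x _ => X ∈ W ∧ x ∈ R' X
  | .not e => Event.InLang W R' e
  | .and a b => Event.InLang W R' a ∧ Event.InLang W R' b
  | .or a b => Event.InLang W R' a ∧ Event.InLang W R' b

end Event

/-- Causal formulas: Boolean combinations of atomic formulas `[Y ← y]φ`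
with `Y ← y` an allowed intervention and `φ` an event. -/
inductive CForm (S : Signature) : Type where
  | tru : CForm S
  | box : (I : S.V → Option S.Val) → I ∈ S.Int → Event S → CForm S
  | not : CForm S → CForm S
  | and : CForm S → CForm S → CForm S
  | or : CForm S → CForm S → CForm S

namespace CForm

def imp (a b : CForm S) : CForm S := CForm.or (CForm.not a) b

def iff (a b : CForm S) : CForm S := CForm.and (imp a b) (imp b a)

/-- `⟨Y ← y⟩φ` abbreviates `¬[Y ← y]¬φ`. -/
def dia (I : S.V → Option S.Val) (hI : I ∈ S.Int) (e : Event S) : CForm S :=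
  CForm.not (CForm.box I hI (Event.not e))

/-- Satisfaction of a causal formula at a context, relative to an outcome map `O`. -/
def sat (O : (I : S.V → Option S.Val) → I ∈ S.Int → Context S → Set (Assignment S))
    (u : Context S) : CForm S → Prop
  | .tru => True
  | .box I hI e => ∀ v ∈ O I hI u, e.sat v
  | .not φ => ¬ CForm.sat O u φ
  | .and a b => CForm.sat O u a ∧ CForm.sat O u b
  | .or a b => CForm.sat O u a ∨ CForm.sat O u b

/-- Boolean evaluation of a causal formula under an arbitrary valuation of its
atomic formulas; used to define propositional tautologies. -/
def evalB (val : (S.V → Option S.Val) → Event S → Bool) : CForm S → Bool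
  | .tru => true
  | .box I _ e => val I e
  | .not φ => !(CForm.evalB val φ)
  | .and a b => CForm.evalB val a && CForm.evalB val b
  | .or a b => CForm.evalB val a || CForm.evalB val b

/-- A causal formula is an instance of a propositional tautology if it is true
under every Boolean valuation of its atomic formulas. -/
def Taut (φ : CForm S) : Prop := ∀ val, CForm.evalB val φ = true

/-- The value `x` of variable `X` is mentioned in the causal formula
(either in a primitive event or in an intervention). -/
def mentionsVal (X : S.V) (x : S.Val) : CForm S → Prop
  | .tru => False
  | .box I _ e => I X = some x ∨ e.mentionsVal X x
  | .not φ => CForm.mentionsVal X x φ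
  | .and a b => CForm.mentionsVal X x a ∨ CForm.mentionsVal X x b
  | .or a b => CForm.mentionsVal X x a ∨ CForm.mentionsVal X x b

def bigAnd (l : List (CForm S)) : CForm S := l.foldr CForm.and CForm.tru

def bigOr (l : List (CForm S)) : CForm S := l.foldr CForm.or (CForm.not CForm.tru)

/-- Membership in the restricted language `L_{W,R',I'}(S)`. -/
def InLang (W : Set S.V) (R' : S.V → Set S.Val) (I' : Set (S.V → Option S.Val)) :
    CForm S → Prop
  | .tru => True
  | .box I _ e => I ∈ I' ∧ e.InLang W R'
  | .not φ => CForm.InLang W R' I' φ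
  | .and a b => CForm.InLang W R' I' a ∧ CForm.InLang W R' I' b
  | .or a b => CForm.InLang W R' I' a ∧ CForm.InLang W R' I' b

end CForm

/-- A structural equations model over `S`: each endogenous variable gets an
equation determining its value from the values of all other variables
(formally, `F X u v` does not depend on `v X`). -/
structure SEM (S : Signature) where
  F : S.V → (S.U → S.Val) → (S.V → S.Val) → S.Val
  F_range : ∀ X uu vv, F X uu vv ∈ S.RV X
  F_indep_self : ∀ X uu vv vv', (∀ Y, Y ≠ X → vv Y = vv' Y) → F X uu vv = F X uu vv'

namespace SEM

/-- The outcomes of a SEM under an intervention: solutions of the modified equations. -/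
def outcomes (M : SEM S) (u : Context S) (I : S.V → Option S.Val) :
    Set (Assignment S) :=
  {v | ∀ X, (∀ x, I X = some x → v.1 X = x) ∧ (I X = none → v.1 X = M.F X u.1 v.1)}

def sat (M : SEM S) (u : Context S) (φ : CForm S) : Prop :=
  φ.sat (fun I _ u' => M.outcomes u' I) u

def Valid (M : SEM S) (φ : CForm S) : Prop := ∀ u, M.sat u φ

/-- `X` is independent of `Y` in context `uu`: the equation for `X` does not
depend on the value of `Y`. -/
def IndepAt (M : SEM S) (uu : S.U → S.Val) (X Y : S.V) : Prop :=
  ∀ vv vv', (∀ Z, Z ≠ Y → vv Z = vv' Z) → M.F X uu vv = M.F X uu vv'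

/-- An acyclic (recursive) SEM. -/
def Acyclic (M : SEM S) : Prop :=
  ∀ u : Context S, ∃ lt : S.V → S.V → Prop, IsStrictTotalOrder S.V lt ∧
    ∀ X Y, lt X Y → M.IndepAt u.1 X Y

end SEM

/-- A generalized structural equations model: an arbitrary (effective) map from
allowed interventions and contexts to sets of outcomes. -/
structure GSEM (S : Signature) where
  F : (I : S.V → Option S.Val) → I ∈ S.Int → Context S → Set (Assignment S)
  effective : ∀ I hI u v, v ∈ F I hI u → ∀ X x, I X = some x → v.1 X = x

namespace GSEM

def sat (M : GSEM S) (u : Context S) (φ : CForm S) : Prop :=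
  φ.sat M.F u

def Valid (M : GSEM S) (φ : CForm S) : Prop := ∀ u, M.sat u φ

/-- A finitary GSEM: all outcome sets are finite. -/
def Finitary (M : GSEM S) : Prop := ∀ I hI u, (M.F I hI u).Finite

end GSEM

/-- Equivalence of two GSEMs: same outcomes for all contexts and allowed interventions. -/
def GSEM.equiv (M M' : GSEM S) : Prop := ∀ I hI u, M.F I hI u = M'.F I hI u

/-- `L(S)`-equivalence of two GSEMs: they agree on all causal formulas. -/
def GSEM.LEquiv (M M' : GSEM S) : Prop := ∀ u φ, M.sat u φ ↔ M'.sat u φ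

/-- Equivalence of a SEM and a GSEM. -/
def SEM.equivGSEM (M : SEM S) (M' : GSEM S) : Prop :=
  ∀ (I : S.V → Option S.Val) (hI : I ∈ S.Int) (u : Context S),
    M.outcomes u I = M'.F I hI u

/-- The projection of an outcome set to a single variable. -/
def projSet (T : Set (Assignment S)) (Y : S.V) : Set S.Val := (fun v => v.1 Y) '' T

/-- The restriction of an outcome set to a set of variables. -/
def restrictSet (T : Set (Assignment S)) (Wv : Set S.V) : Set (Wv → S.Val) :=
  (fun (v : Assignment S) (Y : Wv) => v.1 Y.1) '' T

/-! ### Axiom schemas -/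

/-- D0: all instances of propositional tautologies. -/
def AxD0 (S : Signature) : Set (CForm S) := {φ | φ.Taut}

/-- D1 (functionality): `[Y ← y](X = x ⇒ X ≠ x')` for `x ≠ x'`. -/
def AxD1 (S : Signature) : Set (CForm S) :=
  {φ | ∃ (I : S.V → Option S.Val) (hI : I ∈ S.Int) (X : S.V) (x x' : S.Val)
      (hx : x ∈ S.RV X) (hx' : x' ∈ S.RV X), x ≠ x' ∧
    φ = CForm.box I hI (Event.imp (Event.prim X x hx) (Event.not (Event.prim X x' hx')))}

/-- D2 (definiteness): `[Y ← y](⋁_{x ∈ R(X)} X = x)`. -/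
def AxD2 (S : Signature) : Set (CForm S) :=
  {φ | ∃ (I : S.V → Option S.Val) (hI : I ∈ S.Int) (X : S.V)
      (l : List {x : S.Val // x ∈ S.RV X}),
    (∀ x : {x : S.Val // x ∈ S.RV X}, x ∈ l) ∧ φ = CForm.box I hI (Event.disjEq X l)}

/-- D3 (composition): `⟨X ← x⟩(W = w ∧ φ) ⇒ ⟨X ← x; W ← w⟩φ`. -/
def AxD3 (S : Signature) : Set (CForm S) :=
  {ψ | ∃ (I : S.V → Option S.Val) (hI : I ∈ S.Int) (W : S.V) (w : S.Val)
      (hw : w ∈ S.RV W) (hIW : updInt I W w ∈ S.Int) (e : Event S),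
    ψ = CForm.imp (CForm.dia I hI (Event.and (Event.prim W w hw) e))
          (CForm.dia (updInt I W w) hIW e)}

/-- D4 (effectiveness): `[X ← x](X = x)`. -/
def AxD4 (S : Signature) : Set (CForm S) :=
  {φ | ∃ (I : S.V → Option S.Val) (hI : I ∈ S.Int) (X : S.V) (x : S.Val)
      (hx : x ∈ S.RV X), I X = some x ∧ φ = CForm.box I hI (Event.prim X x hx)}

/-- D5 (reversibility), with `Z = V − (X ∪ {W, Y})`. -/
def AxD5 (S : Signature) : Set (CForm S) :=
  {φ | ∃ (I : S.V → Option S.Val) (hI : I ∈ S.Int) (Y : S.V) (y : S.Val)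
      (hy : y ∈ S.RV Y) (W : S.V) (w : S.Val) (hw : w ∈ S.RV W)
      (hIY : updInt I Y y ∈ S.Int) (hIW : updInt I W w ∈ S.Int)
      (lZ : List ((X : S.V) × {x : S.Val // x ∈ S.RV X})),
    (lZ.map Sigma.fst).Nodup ∧
    (∀ Z : S.V, (∃ p ∈ lZ, p.1 = Z) ↔ (I Z = none ∧ Z ≠ W ∧ Z ≠ Y)) ∧
    φ = CForm.imp
      (CForm.and
        (CForm.dia (updInt I Y y) hIY (Event.and (Event.prim W w hw) (Event.conjEqL lZ)))
        (CForm.dia (updInt I W w) hIW (Event.and (Event.prim Y y hy) (Event.conjEqL lZ))))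
      (CForm.dia I hI (Event.and (Event.prim W w hw)
        (Event.and (Event.prim Y y hy) (Event.conjEqL lZ))))}

/-- A disjunct of the formula `Y ⇝ Z` ("Y affects Z"). -/
noncomputable def ltComp (I : S.V → Option S.Val) (hI : I ∈ S.Int) (Y : S.V) (y : S.Val)
    (hIY : updInt I Y y ∈ S.Int) (Z : S.V) (z z' : S.Val)
    (hz : z ∈ S.RV Z) (hz' : z' ∈ S.RV Z) : CForm S :=
  CForm.and (CForm.box I hI (Event.prim Z z hz))
    (CForm.box (updInt I Y y) hIY (Event.prim Z z' hz'))

/-- `φ` is (an instance of) the formula `Y ⇝ Z`: the disjunction, over all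
interventions `X ← x`, values `y ∈ R(Y)` and `z ≠ z' ∈ R(Z)`, of
`[X ← x](Z = z) ∧ [X ← x; Y ← y](Z = z')`. -/
def IsLeadsTo (Y Z : S.V) (φ : CForm S) : Prop :=
  ∃ l : List (CForm S),
    (∀ ψ ∈ l, ∃ (I : S.V → Option S.Val) (hI : I ∈ S.Int) (y : S.Val)
        (_ : y ∈ S.RV Y) (hIY : updInt I Y y ∈ S.Int) (z z' : S.Val)
        (hz : z ∈ S.RV Z) (hz' : z' ∈ S.RV Z), z ≠ z' ∧
        ψ = ltComp I hI Y y hIY Z z z' hz hz') ∧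
    (∀ (I : S.V → Option S.Val) (hI : I ∈ S.Int) (y : S.Val), y ∈ S.RV Y →
      ∀ (hIY : updInt I Y y ∈ S.Int) (z z' : S.Val) (hz : z ∈ S.RV Z)
        (hz' : z' ∈ S.RV Z), z ≠ z' →
        ltComp I hI Y y hIY Z z z' hz hz' ∈ l) ∧
    φ = CForm.bigOr l

/-- D6 (recursiveness): `(X₀ ⇝ X₁ ∧ … ∧ X_{k−1} ⇝ X_k) ⇒ ¬(X_k ⇝ X₀)`. -/
def AxD6 (S : Signature) : Set (CForm S) :=
  {φ | ∃ (k : ℕ) (Xs : Fin (k+1) → S.V) (fs : Fin k → CForm S) (g : CForm S),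
    (∀ i : Fin k, IsLeadsTo (Xs i.castSucc) (Xs i.succ) (fs i)) ∧
    IsLeadsTo (Xs (Fin.last k)) (Xs 0) g ∧
    φ = CForm.imp (CForm.bigAnd (List.ofFn fs)) (CForm.not g)}

/-- D7 (distribution): `([X ← x]φ ∧ [X ← x](φ ⇒ ψ)) ⇒ [X ← x]ψ`. -/
def AxD7 (S : Signature) : Set (CForm S) :=
  {φ | ∃ (I : S.V → Option S.Val) (hI : I ∈ S.Int) (a b : Event S),
    φ = CForm.imp (CForm.and (CForm.box I hI a) (CForm.box I hI (Event.imp a b)))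
          (CForm.box I hI b)}

/-- D8 (generalization): `[X ← x]φ` for `φ` a propositional tautology. -/
def AxD8 (S : Signature) : Set (CForm S) :=
  {φ | ∃ (I : S.V → Option S.Val) (hI : I ∈ S.Int) (e : Event S), e.Taut ∧
    φ = CForm.box I hI e}

/-- D9 (unique outcomes for `V − {X}`): `⟨Y ← y⟩true ∧ (⟨Y ← y⟩φ ⇒ [Y ← y]φ)`
for `Y = V − {X}`. -/
def AxD9 (S : Signature) : Set (CForm S) :=
  {φ | ∃ (I : S.V → Option S.Val) (hI : I ∈ S.Int) (X : S.V) (e : Event S),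
    I X = none ∧ (∀ Z, Z ≠ X → I Z ≠ none) ∧
    φ = CForm.and (CForm.dia I hI Event.tru)
          (CForm.imp (CForm.dia I hI e) (CForm.box I hI e))}

/-- Halpern's version of D9: `⟨Y ← y⟩true ∧ ⋁_{x ∈ R(X)} [Y ← y](X = x)`
for `Y = V − {X}`. -/
def AxHD9 (S : Signature) : Set (CForm S) :=
  {φ | ∃ (I : S.V → Option S.Val) (hI : I ∈ S.Int) (X : S.V)
      (l : List {x : S.Val // x ∈ S.RV X}),
    I X = none ∧ (∀ Z, Z ≠ X → I Z ≠ none) ∧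
    (∀ x : {x : S.Val // x ∈ S.RV X}, x ∈ l) ∧
    φ = CForm.and (CForm.dia I hI Event.tru)
          (CForm.bigOr (l.map fun x => CForm.box I hI (Event.prim X x.1 x.2)))}

/-- D10(a) (at least one outcome): `⟨Y ← y⟩true`. -/
def AxD10a (S : Signature) : Set (CForm S) :=
  {φ | ∃ (I : S.V → Option S.Val) (hI : I ∈ S.Int), φ = CForm.dia I hI Event.tru}

/-- D10(b) (at most one outcome): `⟨Y ← y⟩φ ⇒ [Y ← y]φ`. -/
def AxD10b (S : Signature) : Set (CForm S) :=
  {φ | ∃ (I : S.V → Option S.Val) (hI : I ∈ S.Int) (e : Event S),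
    φ = CForm.imp (CForm.dia I hI e) (CForm.box I hI e)}

/-! ### The axiom schema D6⁺ -/

/-- `X_{-i} = ȳ` : the conjunction of `X_j = g j` over the indices `j ≠ i`. -/
def Event.conjEqVec {k : ℕ} (Xs : Fin k → S.V)
    (g : ∀ j : Fin k, {x : S.Val // x ∈ S.RV (Xs j)}) (i : Fin k) : Event S :=
  Event.bigAnd (((List.finRange k).filter (fun j => j ≠ i)).map
    fun j => Event.prim (Xs j) (g j).1 (g j).2)

/-- A disjunct of the formula `X_i ⇝_{I',U₁,…,U_k,X₁,…,X_k} X_{−i}`: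
`[I; X_i ← x](X_{−i} = ȳ) ∧ [I; X_i ← x'](X_{−i} ≠ ȳ)`. -/
noncomputable def affComp {k : ℕ} (Xs : Fin k → S.V) (i : Fin k) (I : S.V → Option S.Val)
    (x x' : {v : S.Val // v ∈ S.RV (Xs i)})
    (hx : updInt I (Xs i) x.1 ∈ S.Int) (hx' : updInt I (Xs i) x'.1 ∈ S.Int)
    (g : ∀ j : Fin k, {v : S.Val // v ∈ S.RV (Xs j)}) : CForm S :=
  CForm.and (CForm.box (updInt I (Xs i) x.1) hx (Event.conjEqVec Xs g i))
    (CForm.box (updInt I (Xs i) x'.1) hx' (Event.not (Event.conjEqVec Xs g i)))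

/-- `φ` is (an instance of) the formula `X_i ⇝_{I',U₁,…,U_k,X₁,…,X_k} X_{−i}`. -/
def IsAffects {k : ℕ} (Xs : Fin k → S.V) (Us : Fin k → Set S.Val)
    (Is : Set (S.V → Option S.Val)) (i : Fin k) (φ : CForm S) : Prop :=
  ∃ l : List (CForm S),
    (∀ ψ ∈ l, ∃ (I : S.V → Option S.Val) (x x' : {v : S.Val // v ∈ S.RV (Xs i)})
        (hx : updInt I (Xs i) x.1 ∈ S.Int) (hx' : updInt I (Xs i) x'.1 ∈ S.Int)
        (g : ∀ j : Fin k, {v : S.Val // v ∈ S.RV (Xs j)}),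
        I ∈ Is ∧ x.1 ∈ Us i ∧ x'.1 ∈ Us i ∧ (∀ j, j ≠ i → (g j).1 ∈ Us j) ∧
        ψ = affComp Xs i I x x' hx hx' g) ∧
    (∀ (I : S.V → Option S.Val), I ∈ Is →
      ∀ (x x' : {v : S.Val // v ∈ S.RV (Xs i)})
        (hx : updInt I (Xs i) x.1 ∈ S.Int) (hx' : updInt I (Xs i) x'.1 ∈ S.Int)
        (g : ∀ j : Fin k, {v : S.Val // v ∈ S.RV (Xs j)}),
        x.1 ∈ Us i → x'.1 ∈ Us i → (∀ j, j ≠ i → (g j).1 ∈ Us j) →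
        affComp Xs i I x x' hx hx' g ∈ l) ∧
    φ = CForm.bigOr l

/-- D6⁺: `⋁_{i=1}^k ¬(X_i ⇝_{I',U₁,…,U_k,X₁,…,X_k} X_{−i})`, one instance for
each finite choice of variables `X₁,…,X_k`, finite value sets `U_i ⊆ R(X_i)`,
and finite set `I'` of allowed interventions. -/
def AxD6p (S : Signature) : Set (CForm S) :=
  {φ | ∃ (k : ℕ) (Xs : Fin k → S.V) (Us : Fin k → Set S.Val)
      (Is : Set (S.V → Option S.Val)) (fs : Fin k → CForm S),
    (∀ j, Us j ⊆ S.RV (Xs j)) ∧ (∀ j, (Us j).Finite) ∧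
    Is ⊆ S.Int ∧ Is.Finite ∧
    (∀ i, IsAffects Xs Us Is i (fs i)) ∧
    φ = CForm.bigOr (List.ofFn fun i => CForm.not (fs i))}

/-! ### Axiom systems and provability -/

def AXplus (S : Signature) : Set (CForm S) :=
  AxD0 S ∪ AxD1 S ∪ AxD2 S ∪ AxD3 S ∪ AxD4 S ∪ AxD5 S ∪ AxD7 S ∪ AxD8 S ∪ AxD9 S

def AXplusRec (S : Signature) : Set (CForm S) :=
  AxD0 S ∪ AxD1 S ∪ AxD2 S ∪ AxD3 S ∪ AxD4 S ∪ AxD6 S ∪ AxD7 S ∪ AxD8 S ∪ AxD9 S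
    ∪ AxD10a S ∪ AxD10b S

def AXbasic (S : Signature) : Set (CForm S) :=
  AxD0 S ∪ AxD1 S ∪ AxD2 S ∪ AxD4 S ∪ AxD7 S ∪ AxD8 S

def AXbasicRec (S : Signature) : Set (CForm S) := AXbasic S ∪ AxD6p S

def AXminus (S : Signature) : Set (CForm S) :=
  AxD0 S ∪ AxD2 S ∪ AxD3 S ∪ AxD6 S ∪ AxD7 S ∪ AxD8 S ∪ AxD10a S ∪ AxD10b S

def AXEQ (S : Signature) : Set (CForm S) :=
  AxD0 S ∪ AxD1 S ∪ AxD2 S ∪ AxD7 S ∪ AxD8 S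

/-- Provability from a set of axioms, with modus ponens. -/
inductive Provable (Ax : Set (CForm S)) : CForm S → Prop
  | ax {φ} : φ ∈ Ax → Provable Ax φ
  | mp {φ ψ} : Provable Ax (CForm.imp φ ψ) → Provable Ax φ → Provable Ax ψ

/-- Provability from a set of axioms, with modus ponens and the inference rule
D2⁺, relative to named variables `W`, named values `R'`, and a language `L`. -/
inductive ProvableStar (Ax : Set (CForm S)) (W : Set S.V) (R' : S.V → Set S.Val)
    (L : Set (CForm S)) : CForm S → Prop
  | ax {φ} : φ ∈ Ax → ProvableStar Ax W R' L φ
  | mp {φ ψ} : ProvableStar Ax W R' L (CForm.imp φ ψ) → ProvableStar Ax W R' L φ →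
      ProvableStar Ax W R' L ψ
  | d2plus {φ : CForm S} {I : S.V → Option S.Val} {hI : I ∈ S.Int} {ψ : Event S}
      {X : S.V} (hXW : X ∈ W)
      (l : List {x : S.Val // x ∈ S.RV X})
      (hsub : ∀ x ∈ l, x.1 ∈ R' X)
      (hmem : ∀ (x : S.Val) (hx : x ∈ S.RV X),
        (CForm.imp φ (CForm.box I hI ψ)).mentionsVal X x →
        (⟨x, hx⟩ : {x : S.Val // x ∈ S.RV X}) ∈ l)
      (hfresh : (∃ x ∈ R' X, ¬ (CForm.imp φ (CForm.box I hI ψ)).mentionsVal X x) →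
        ∃ x ∈ l, ¬ (CForm.imp φ (CForm.box I hI ψ)).mentionsVal X x.1)
      (hL : CForm.imp φ (CForm.box I hI (Event.not ψ)) ∈ L)
      (hprem : ProvableStar Ax W R' L
        (CForm.imp φ (CForm.bigAnd (l.map fun x =>
          CForm.box I hI (Event.imp ψ (Event.not (Event.prim X x.1 x.2)))))))
      : ProvableStar Ax W R' L (CForm.imp φ (CForm.box I hI (Event.not ψ)))

/-! ### Properties of GSEMs -/

/-- Coherence: if `v` is an outcome of `X ← x` and `v` agrees with a finite
extension `X ← x; Y ← y` of the intervention, then `v` is an outcome of the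
extended intervention. -/
def GSEM.Coherent (M : GSEM S) : Prop :=
  ∀ (I₁ : S.V → Option S.Val) (h₁ : I₁ ∈ S.Int) (I₂ : S.V → Option S.Val)
    (h₂ : I₂ ∈ S.Int),
    (∀ X x, I₁ X = some x → I₂ X = some x) →
    {X | I₁ X = none ∧ I₂ X ≠ none}.Finite →
    ∀ (u : Context S) (v : Assignment S), v ∈ M.F I₁ h₁ u →
      (∀ X x, I₂ X = some x → v.1 X = x) → v ∈ M.F I₂ h₂ u

/-- Condition Acyc1 for a GSEM, a context, and a strict order on the variables. -/
def GSEM.Acyc1At (M : GSEM S) (u : Context S) (lt : S.V → S.V → Prop) : Prop :=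
  ∀ (X : S.V) (x x' : S.Val), x ∈ S.RV X → x' ∈ S.RV X →
    ∀ (I : S.V → Option S.Val), I ∈ S.Int →
      ∀ (hx : updInt I X x ∈ S.Int) (hx' : updInt I X x' ∈ S.Int),
        restrictSet (M.F (updInt I X x) hx u) {Y | lt Y X}
          = restrictSet (M.F (updInt I X x') hx' u) {Y | lt Y X}

/-- An acyclic GSEM: for each context there is a total order on the endogenous
variables satisfying Acyc1. -/
def GSEM.Acyclic (M : GSEM S) : Prop :=
  ∀ u : Context S, ∃ lt : S.V → S.V → Prop, IsStrictTotalOrder S.V lt ∧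
    M.Acyc1At u lt

/-! ### Consistency and acceptability -/

/-- A set of formulas is consistent with a provability notion `Pr` if the
negation of the conjunction of no finite subset is provable. -/
def Consistent (Pr : CForm S → Prop) (C : Set (CForm S)) : Prop :=
  ∀ l : List (CForm S), (∀ ψ ∈ l, ψ ∈ C) → ¬ Pr (CForm.not (CForm.bigAnd l))

def MaxConsistent (Pr : CForm S → Prop) (C : Set (CForm S)) : Prop :=
  Consistent Pr C ∧ ∀ ψ ∉ C, ¬ Consistent Pr (insert ψ C)

/-- `C` is acceptable for `⟨Y ← y⟩φ` with respect to `Z`: some conjunctive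
formula `ψ` extends the conjuncts of `φ`, contains a conjunct `Z = z` with `z`
a named value, and `⟨Y ← y⟩ψ ∈ C`. -/
def AcceptableFor (C : Set (CForm S)) (I : S.V → Option S.Val) (hI : I ∈ S.Int)
    (φ : Event S) (R' : S.V → Set S.Val) (Z : S.V) : Prop :=
  ∃ ψ : Event S, ψ.Conjunctive ∧ φ.conjuncts ⊆ ψ.conjuncts ∧
    (∃ (z : S.Val) (hz : z ∈ S.RV Z), z ∈ R' Z ∧ Event.prim Z z hz ∈ ψ.conjuncts) ∧
    CForm.dia I hI ψ ∈ C

end Causal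

namespace Causal

/-- The axiom set of `AX*_{basic,A}(S, W, R', I')`: the axioms of `AX⁺_basic`
together with the axiom schemas in `A ⊆ {D3, D6⁺, D10(a), D10(b)}`, all
restricted to the language `L_{W,R',I'}(S)`.  (The inference rules MP and D2⁺
are built into `ProvableStar`.) -/
def starAxioms (S : Signature) (W : Set S.V) (R' : S.V → Set S.Val)
    (I' : Set (S.V → Option S.Val)) (useD3 useD6p useD10a useD10b : Prop) :
    Set (CForm S) :=
  (AXbasic S ∪ {ψ | useD3 ∧ ψ ∈ AxD3 S} ∪ {ψ | useD6p ∧ ψ ∈ AxD6p S}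
      ∪ {ψ | useD10a ∧ ψ ∈ AxD10a S} ∪ {ψ | useD10b ∧ ψ ∈ AxD10b S})
    ∩ {ψ | ψ.InLang W R' I'}

/-! ### Auxiliary lemmas for Statement 13 -/

section Aux

variable {S : Signature}

lemma evalB_bigAnd (val) (l : List (CForm S)) :
    CForm.evalB val (CForm.bigAnd l) = true ↔ ∀ m ∈ l, CForm.evalB val m = true := by
  induction l with
  | nil => simp [CForm.bigAnd, CForm.evalB]
  | cons h t ih =>
      simp only [CForm.bigAnd, List.foldr] at ih ⊢
      simp [CForm.evalB, ih]

lemma inLang_bigAnd {W : Set S.V} {R' : S.V → Set S.Val} {I' : Set (S.V → Option S.Val)}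
    {l : List (CForm S)} (h : ∀ m ∈ l, CForm.InLang W R' I' m) :
    CForm.InLang W R' I' (CForm.bigAnd l) := by
  induction l with
  | nil => simp [CForm.bigAnd, CForm.InLang]
  | cons a t ih =>
      simp only [CForm.bigAnd, List.foldr] at ih ⊢
      exact ⟨h a (by simp), ih fun m hm => h m (by simp [hm])⟩

/-- Values mentioned in an event, collected syntactically. -/
def mentE : Event S → List S.Val
  | .tru => []
  | .prim _ x _ => [x]
  | .not e => mentE e
  | .and a b => mentE a ++ mentE b
  | .or a b => mentE a ++ mentE b

lemma mem_mentE {X : S.V} {x : S.Val} :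
    ∀ {e : Event S}, e.mentionsVal X x → x ∈ mentE e := by
  intro e
  induction e with
  | tru => intro h; exact absurd h (by simp [Event.mentionsVal])
  | prim X' x' hx' => intro h; obtain ⟨_, rfl⟩ := h; simp [mentE]
  | not e ih => exact fun h => ih h
  | and a b iha ihb =>
      intro h; rcases h with h | h
      · simp [mentE, iha h]
      · simp [mentE, ihb h]
  | or a b iha ihb =>
      intro h; rcases h with h | h
      · simp [mentE, iha h]
      · simp [mentE, ihb h]

/-- Values of `X` mentioned in a causal formula, collected syntactically. -/
def mentC (X : S.V) : CForm S → List S.Val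
  | .tru => []
  | .box I _ e => (I X).toList ++ mentE e
  | .not a => mentC X a
  | .and a b => mentC X a ++ mentC X b
  | .or a b => mentC X a ++ mentC X b

lemma mem_mentC {X : S.V} {x : S.Val} :
    ∀ {φ : CForm S}, φ.mentionsVal X x → x ∈ mentC X φ := by
  intro φ
  induction φ with
  | tru => intro h; exact absurd h (by simp [CForm.mentionsVal])
  | box I hI e =>
      intro h; rcases h with h | h
      · simp [mentC, h]
      · simp [mentC, mem_mentE h]
  | not a ih => exact fun h => ih h
  | and a b iha ihb =>
      intro h; rcases h with h | h
      · simp [mentC, iha h]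
      · simp [mentC, ihb h]
  | or a b iha ihb =>
      intro h; rcases h with h | h
      · simp [mentC, iha h]
      · simp [mentC, ihb h]

lemma mentions_named_event {W : Set S.V} {R' : S.V → Set S.Val} {X : S.V} {x : S.Val} :
    ∀ {e : Event S}, e.InLang W R' → e.mentionsVal X x → x ∈ R' X := by
  intro e
  induction e with
  | tru => intro _ h; exact absurd h (by simp [Event.mentionsVal])
  | prim X' x' hx' => intro hL h; obtain ⟨rfl, rfl⟩ := h; exact hL.2
  | not e ih => exact fun hL h => ih hL h
  | and a b iha ihb =>
      intro hL h; rcases h with h | h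
      · exact iha hL.1 h
      · exact ihb hL.2 h
  | or a b iha ihb =>
      intro hL h; rcases h with h | h
      · exact iha hL.1 h
      · exact ihb hL.2 h

lemma mentions_named {W : Set S.V} {R' : S.V → Set S.Val} {I' : Set (S.V → Option S.Val)}
    (hI'named : ∀ I ∈ I', ∀ X x, I X = some x → X ∈ W ∧ x ∈ R' X)
    {X : S.V} {x : S.Val} :
    ∀ {φ : CForm S}, φ.InLang W R' I' → φ.mentionsVal X x → x ∈ R' X := by
  intro φ
  induction φ with
  | tru => intro _ h; exact absurd h (by simp [CForm.mentionsVal])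
  | box I hI e =>
      intro hL h
      rcases h with h | h
      · exact (hI'named I hL.1 X x h).2
      · exact mentions_named_event hL.2 h
  | not a ih => exact fun hL h => ih hL h
  | and a b iha ihb =>
      intro hL h; rcases h with h | h
      · exact iha hL.1 h
      · exact ihb hL.2 h
  | or a b iha ihb =>
      intro hL h; rcases h with h | h
      · exact iha hL.1 h
      · exact ihb hL.2 h

/-- A tower of trivially true formulas, used to produce infinitely many provable
formulas in the language. -/
def tower : ℕ → CForm S
  | 0 => CForm.tru
  | n+1 => CForm.and (tower n) CForm.tru

def csize : CForm S → ℕ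
  | .tru => 0
  | .box _ _ _ => 0
  | .not a => csize a + 1
  | .and a b => csize a + csize b + 1
  | .or a b => csize a + csize b + 1

lemma csize_tower (n : ℕ) : csize (tower n : CForm S) = n := by
  induction n with
  | zero => simp [tower, csize]
  | succ n ih => simp [tower, csize, ih]

lemma tower_inj : Function.Injective (tower (S := S)) := by
  intro a b h
  have := congrArg csize h
  simpa [csize_tower] using this

lemma tower_taut (n : ℕ) : (tower n : CForm S).Taut := by
  induction n with
  | zero => intro val; rfl
  | succ n ih => intro val; simp [tower, CForm.evalB, ih val]

lemma tower_inLang {W : Set S.V} {R' : S.V → Set S.Val} {I' : Set (S.V → Option S.Val)}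
    (n : ℕ) : (tower n : CForm S).InLang W R' I' := by
  induction n with
  | zero => trivial
  | succ n ih => exact ⟨ih, trivial⟩

lemma prov_taut {W : Set S.V} {R' : S.V → Set S.Val} {I' : Set (S.V → Option S.Val)}
    {u3 u6 ua ub : Prop} {L : Set (CForm S)} {φ : CForm S}
    (ht : φ.Taut) (hl : φ.InLang W R' I') :
    ProvableStar (starAxioms S W R' I' u3 u6 ua ub) W R' L φ := by
  refine ProvableStar.ax ⟨?_, hl⟩
  exact Or.inl (Or.inl (Or.inl (Or.inl (Or.inl (Or.inl (Or.inl (Or.inl (Or.inl ht))))))))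

lemma prov_d7 {W : Set S.V} {R' : S.V → Set S.Val} {I' : Set (S.V → Option S.Val)}
    {u3 u6 ua ub : Prop} {L : Set (CForm S)}
    (I : S.V → Option S.Val) (hI : I ∈ S.Int) (a b : Event S)
    (hl : (CForm.imp (CForm.and (CForm.box I hI a) (CForm.box I hI (Event.imp a b)))
          (CForm.box I hI b)).InLang W R' I') :
    ProvableStar (starAxioms S W R' I' u3 u6 ua ub) W R' L
      (CForm.imp (CForm.and (CForm.box I hI a) (CForm.box I hI (Event.imp a b)))
          (CForm.box I hI b)) := by
  refine ProvableStar.ax ⟨?_, hl⟩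
  exact Or.inl (Or.inl (Or.inl (Or.inl (Or.inl (Or.inr ⟨I, hI, a, b, rfl⟩)))))

lemma prov_d8 {W : Set S.V} {R' : S.V → Set S.Val} {I' : Set (S.V → Option S.Val)}
    {u3 u6 ua ub : Prop} {L : Set (CForm S)}
    (I : S.V → Option S.Val) (hI : I ∈ S.Int) (e : Event S) (he : e.Taut)
    (hl : (CForm.box I hI e).InLang W R' I') :
    ProvableStar (starAxioms S W R' I' u3 u6 ua ub) W R' L (CForm.box I hI e) := by
  refine ProvableStar.ax ⟨?_, hl⟩
  exact Or.inl (Or.inl (Or.inl (Or.inl (Or.inr ⟨I, hI, e, he, rfl⟩))))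

lemma acceptable_of_mem {C : Set (CForm S)} {I : S.V → Option S.Val} {hI : I ∈ S.Int}
    {φ : Event S} (hconj : φ.Conjunctive) {R' : S.V → Set S.Val} {X : S.V}
    {x : S.Val} {hx : x ∈ S.RV X} (hxR : x ∈ R' X)
    (h : CForm.dia I hI (Event.and φ (Event.prim X x hx)) ∈ C) :
    AcceptableFor C I hI φ R' X := by
  refine ⟨Event.and φ (Event.prim X x hx), hconj.and (Event.Conjunctive.eq X x hx),
    ?_, ?_, h⟩
  · simp [Event.conjuncts]
  · exact ⟨x, hx, hxR, by simp [Event.conjuncts]⟩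

end Aux

/-- If `C` is a finite subset of `L_{W,R',I'}(S)` consistent
with `AX*_{basic,A}(S, W, R', I')`, `⟨Y ← y⟩φ ∈ C` with `φ` a conjunctive
formula, and `X ∈ W`, then there exists a formula `ψ ∈ L_{W,R',I'}(S)` not in
`C` such that `C ∪ {ψ}` is consistent with `AX*_{basic,A}(S, W, R', I')` and is
acceptable for `⟨Y ← y⟩φ` with respect to `X`. -/
theorem acceptable_extension (S : Signature)
    (W : Set S.V) (hWc : W.Countable)
    (R' : S.V → Set S.Val)
    (hR'c : ∀ X ∈ W, (R' X).Countable)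
    (hR'sub : ∀ X, R' X ⊆ S.RV X)
    (hR'fin : ∀ X ∈ W, (S.RV X).Finite → R' X = S.RV X)
    (hR'inf : ∀ X ∈ W, ¬ (S.RV X).Finite → ¬ (R' X).Finite)
    (I' : Set (S.V → Option S.Val)) (hI'c : I'.Countable) (hI'sub : I' ⊆ S.Int)
    (hI'named : ∀ I ∈ I', ∀ X x, I X = some x → X ∈ W ∧ x ∈ R' X)
    (hI'closed : ∀ I₁ ∈ I', ∀ I₂ ∈ S.Int, {X | I₁ X ≠ I₂ X}.Finite →
      (∀ X x, I₂ X = some x → X ∈ W ∧ x ∈ R' X) → I₂ ∈ I')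
    (useD3 useD6p useD10a useD10b : Prop)
    (C : Set (CForm S)) (hCfin : C.Finite)
    (hCL : ∀ ψ ∈ C, ψ.InLang W R' I')
    (hCcons : Consistent
      (ProvableStar (starAxioms S W R' I' useD3 useD6p useD10a useD10b)
        W R' {ψ | ψ.InLang W R' I'}) C)
    (I : S.V → Option S.Val) (hI : I ∈ S.Int)
    (φ : Event S) (hφconj : φ.Conjunctive)
    (hdia : CForm.dia I hI φ ∈ C)
    (X : S.V) (hXW : X ∈ W) :
    ∃ ψ : CForm S, ψ.InLang W R' I' ∧ ψ ∉ C ∧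
      Consistent
        (ProvableStar (starAxioms S W R' I' useD3 useD6p useD10a useD10b)
          W R' {ψ' | ψ'.InLang W R' I'}) (insert ψ C) ∧
      AcceptableFor (insert ψ C) I hI φ R' X := by
  classical
  -- language facts about the formula ⟨I⟩φ ∈ C
  have hdiaL := hCL _ hdia
  have hφL : Event.InLang W R' φ ∧ I ∈ I' := by
    simp only [CForm.dia, CForm.InLang, Event.InLang] at hdiaL
    exact ⟨hdiaL.2, hdiaL.1⟩
  obtain ⟨hφLang, hII'⟩ := hφL
  -- an enumeration of C
  obtain ⟨lC, hlC⟩ : ∃ lC : List (CForm S), ∀ m, m ∈ lC ↔ m ∈ C :=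
    ⟨hCfin.toFinset.toList, by simp⟩
  have hχL : CForm.InLang W R' I' (CForm.bigAnd lC) :=
    inLang_bigAnd fun m hm => hCL m ((hlC m).1 hm)
  -- adding a provable formula preserves consistency
  have hconsIns : ∀ ψ : CForm S, ψ.InLang W R' I' →
      ProvableStar (starAxioms S W R' I' useD3 useD6p useD10a useD10b)
        W R' {ψ' | ψ'.InLang W R' I'} ψ →
      Consistent (ProvableStar (starAxioms S W R' I' useD3 useD6p useD10a useD10b)
        W R' {ψ' | ψ'.InLang W R' I'}) (insert ψ C) := by
    intro ψ hψL hψP l' hl' hPcon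
    refine hCcons lC (fun m hm => (hlC m).1 hm) ?_
    have T : (CForm.imp ψ (CForm.imp (CForm.not (CForm.bigAnd l'))
        (CForm.not (CForm.bigAnd lC)))).Taut := by
      intro val
      by_cases hψ : CForm.evalB val ψ = true
      · by_cases hχv : CForm.evalB val (CForm.bigAnd lC) = true
        · have hall : CForm.evalB val (CForm.bigAnd l') = true := by
            refine (evalB_bigAnd val l').2 fun m hm => ?_
            rcases Set.mem_insert_iff.1 (hl' m hm) with rfl | hmC
            · exact hψ
            · exact (evalB_bigAnd val lC).1 hχv m ((hlC m).2 hmC)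
          simp [CForm.imp, CForm.evalB, hψ, hχv, hall]
        · simp [CForm.imp, CForm.evalB, hψ, hχv]
      · simp [CForm.imp, CForm.evalB, hψ]
    have TL : (CForm.imp ψ (CForm.imp (CForm.not (CForm.bigAnd l'))
        (CForm.not (CForm.bigAnd lC)))).InLang W R' I' := by
      refine ⟨hψL, ?_, hχL⟩
      exact inLang_bigAnd fun m hm => by
        rcases Set.mem_insert_iff.1 (hl' m hm) with rfl | hmC
        · exact hψL
        · exact hCL m hmC
    exact ProvableStar.mp (ProvableStar.mp (prov_taut T TL) hψP) hPcon
  by_cases hA : ∃ x : S.Val, ∃ hx : x ∈ S.RV X, x ∈ R' X ∧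
      CForm.dia I hI (Event.and φ (Event.prim X x hx)) ∉ C ∧
      Consistent (ProvableStar (starAxioms S W R' I' useD3 useD6p useD10a useD10b)
        W R' {ψ' | ψ'.InLang W R' I'})
        (insert (CForm.dia I hI (Event.and φ (Event.prim X x hx))) C)
  · obtain ⟨x, hx, hxR, hnot, hcons⟩ := hA
    refine ⟨CForm.dia I hI (Event.and φ (Event.prim X x hx)), ?_, hnot, hcons,
      acceptable_of_mem hφconj hxR (Set.mem_insert _ _)⟩
    simp only [CForm.dia, CForm.InLang, Event.InLang]
    exact ⟨hII', hφLang, hXW, hxR⟩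
  by_cases hB1 : ∃ x : S.Val, ∃ hx : x ∈ S.RV X, x ∈ R' X ∧
      CForm.dia I hI (Event.and φ (Event.prim X x hx)) ∈ C
  · obtain ⟨x, hx, hxR, hmem⟩ := hB1
    obtain ⟨n, hn⟩ : ∃ n, tower n ∉ C := by
      by_contra h
      push_neg at h
      have hinj : Function.Injective (fun n => (⟨tower n, h n⟩ : C)) := by
        intro a b hab
        exact tower_inj (congrArg Subtype.val hab)
      exact (Set.infinite_coe_iff.mp (Infinite.of_injective _ hinj)) hCfin
    exact ⟨tower n, tower_inLang n, hn,
      hconsIns _ (tower_inLang n) (prov_taut (tower_taut n) (tower_inLang n)),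
      acceptable_of_mem hφconj hxR (Set.mem_insert_of_mem _ hmem)⟩
  -- remaining case: derive a contradiction via D2⁺
  exfalso
  push_neg at hA hB1
  -- the core derivation, for each named value x of X
  have hder : ∀ (x : S.Val) (hx : x ∈ S.RV X), x ∈ R' X →
      ProvableStar (starAxioms S W R' I' useD3 useD6p useD10a useD10b)
        W R' {ψ' | ψ'.InLang W R' I'}
        (CForm.imp (CForm.bigAnd lC)
          (CForm.box I hI (Event.imp φ (Event.not (Event.prim X x hx))))) := by
    intro x hx hxR
    have hnotin := hB1 x hx hxR
    have hincons := hA x hx hxR hnotin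
    simp only [Consistent, not_forall, Classical.not_imp, not_not] at hincons
    obtain ⟨l', hl', hPcon⟩ := hincons
    -- step 1 : ⊢ χ ⇒ [I]¬(φ ∧ X = x)
    have T1 : (CForm.imp (CForm.not (CForm.bigAnd l'))
        (CForm.imp (CForm.bigAnd lC)
          (CForm.box I hI (Event.not (Event.and φ (Event.prim X x hx)))))).Taut := by
      intro val
      by_cases hb : CForm.evalB val
          (CForm.box I hI (Event.not (Event.and φ (Event.prim X x hx)))) = true
      · simp only [CForm.evalB] at hb
        simp [CForm.imp, CForm.evalB, hb]
      · by_cases hχv : CForm.evalB val (CForm.bigAnd lC) = true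
        · have hall : CForm.evalB val (CForm.bigAnd l') = true := by
            refine (evalB_bigAnd val l').2 fun m hm => ?_
            rcases Set.mem_insert_iff.1 (hl' m hm) with rfl | hmC
            · show CForm.evalB val (CForm.not
                (CForm.box I hI (Event.not (Event.and φ (Event.prim X x hx))))) = true
              simp only [CForm.evalB] at hb ⊢
              simp [hb]
            · exact (evalB_bigAnd val lC).1 hχv m ((hlC m).2 hmC)
          simp [CForm.imp, CForm.evalB, hall]
        · simp [CForm.imp, CForm.evalB, hχv]
    have hprimL : Event.InLang W R' (Event.prim X x hx) := ⟨hXW, hxR⟩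
    have T1L : (CForm.imp (CForm.not (CForm.bigAnd l'))
        (CForm.imp (CForm.bigAnd lC)
          (CForm.box I hI (Event.not (Event.and φ (Event.prim X x hx)))))).InLang
          W R' I' := by
      refine ⟨?_, hχL, hII', hφLang, hprimL⟩
      exact inLang_bigAnd fun m hm => by
        rcases Set.mem_insert_iff.1 (hl' m hm) with rfl | hmC
        · exact ⟨hII', hφLang, hprimL⟩
        · exact hCL m hmC
    have h1 := ProvableStar.mp (prov_taut T1 T1L) hPcon
    -- step 2 : D8 instance
    have hT2 : (Event.imp (Event.not (Event.and φ (Event.prim X x hx)))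
        (Event.imp φ (Event.not (Event.prim X x hx)))).Taut := by
      intro val
      simp only [Event.imp, Event.evalB]
      cases hp : Event.evalB val φ <;> cases hq : Event.evalB val (Event.prim X x hx) <;>
        simp
    have h2 := prov_d8 (W := W) (R' := R') (I' := I') (u3 := useD3) (u6 := useD6p)
      (ua := useD10a) (ub := useD10b) (L := {ψ' | CForm.InLang W R' I' ψ'})
      I hI _ hT2 ⟨hII', ⟨hφLang, hprimL⟩, hφLang, hprimL⟩
    -- step 3 : D7 instance
    have h3 := prov_d7 (W := W) (R' := R') (I' := I') (u3 := useD3) (u6 := useD6p)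
      (ua := useD10a) (ub := useD10b) (L := {ψ' | CForm.InLang W R' I' ψ'})
      I hI (Event.not (Event.and φ (Event.prim X x hx)))
      (Event.imp φ (Event.not (Event.prim X x hx)))
      ⟨⟨⟨hII', hφLang, hprimL⟩, hII', ⟨hφLang, hprimL⟩, hφLang, hprimL⟩,
        hII', hφLang, hprimL⟩
    -- glue
    have T4 : (CForm.imp
        (CForm.imp (CForm.bigAnd lC)
          (CForm.box I hI (Event.not (Event.and φ (Event.prim X x hx)))))
        (CForm.imp
          (CForm.box I hI (Event.imp (Event.not (Event.and φ (Event.prim X x hx)))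
            (Event.imp φ (Event.not (Event.prim X x hx)))))
          (CForm.imp
            (CForm.imp (CForm.and
                (CForm.box I hI (Event.not (Event.and φ (Event.prim X x hx))))
                (CForm.box I hI (Event.imp (Event.not (Event.and φ (Event.prim X x hx)))
                  (Event.imp φ (Event.not (Event.prim X x hx))))))
              (CForm.box I hI (Event.imp φ (Event.not (Event.prim X x hx)))))
            (CForm.imp (CForm.bigAnd lC)
              (CForm.box I hI (Event.imp φ (Event.not (Event.prim X x hx)))))))).Taut := by
      intro val
      simp only [CForm.imp, CForm.evalB]
      cases hc : CForm.evalB val (CForm.bigAnd lC) <;>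
        cases h₁ : val I (Event.not (Event.and φ (Event.prim X x hx))) <;>
        cases h₂ : val I (Event.imp (Event.not (Event.and φ (Event.prim X x hx)))
          (Event.imp φ (Event.not (Event.prim X x hx)))) <;>
        cases h₃ : val I (Event.imp φ (Event.not (Event.prim X x hx))) <;>
        simp
    have hboxBL : CForm.InLang W R' I'
        (CForm.box I hI (Event.not (Event.and φ (Event.prim X x hx)))) :=
      ⟨hII', hφLang, hprimL⟩
    have hboxQL : CForm.InLang W R' I'
        (CForm.box I hI (Event.imp (Event.not (Event.and φ (Event.prim X x hx)))
          (Event.imp φ (Event.not (Event.prim X x hx))))) :=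
      ⟨hII', ⟨hφLang, hprimL⟩, hφLang, hprimL⟩
    have hboxSL : CForm.InLang W R' I'
        (CForm.box I hI (Event.imp φ (Event.not (Event.prim X x hx)))) :=
      ⟨hII', hφLang, hprimL⟩
    have T4L : _ := And.intro (And.intro hχL hboxBL)
      (And.intro hboxQL (And.intro (And.intro (And.intro hboxBL hboxQL) hboxSL)
        (And.intro hχL hboxSL)))
    exact ProvableStar.mp (ProvableStar.mp (ProvableStar.mp (prov_taut T4 T4L) h1) h2) h3
  -- the language membership of the relevant formulas
  have hFmlL : (CForm.imp (CForm.bigAnd lC) (CForm.box I hI φ)).InLang W R' I' :=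
    ⟨hχL, hII', hφLang⟩
  -- construct the list of values for D2⁺
  obtain ⟨l, hsub, hmem, hfresh⟩ : ∃ l : List {x : S.Val // x ∈ S.RV X},
      (∀ x ∈ l, x.1 ∈ R' X) ∧
      (∀ (x : S.Val) (hx : x ∈ S.RV X),
        (CForm.imp (CForm.bigAnd lC) (CForm.box I hI φ)).mentionsVal X x →
        (⟨x, hx⟩ : {x : S.Val // x ∈ S.RV X}) ∈ l) ∧
      ((∃ x ∈ R' X, ¬ (CForm.imp (CForm.bigAnd lC)
          (CForm.box I hI φ)).mentionsVal X x) →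
        ∃ x ∈ l, ¬ (CForm.imp (CForm.bigAnd lC)
          (CForm.box I hI φ)).mentionsVal X x.1) := by
    set Fml := CForm.imp (CForm.bigAnd lC) (CForm.box I hI φ) with hFml
    set base : List {x : S.Val // x ∈ S.RV X} :=
      (mentC X Fml).filterMap (fun v =>
        if h : v ∈ S.RV X ∧ v ∈ R' X then some ⟨v, h.1⟩ else none) with hbase
    have hbsub : ∀ x ∈ base, x.1 ∈ R' X := by
      intro x hxb
      rw [hbase, List.mem_filterMap] at hxb
      obtain ⟨v, _, hv⟩ := hxb
      split at hv
      · cases hv; exact (by assumption : v ∈ S.RV X ∧ v ∈ R' X).2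
      · cases hv
    have hbmem : ∀ (x : S.Val) (hx : x ∈ S.RV X), Fml.mentionsVal X x →
        (⟨x, hx⟩ : {x : S.Val // x ∈ S.RV X}) ∈ base := by
      intro x hx hment
      have hxR : x ∈ R' X := mentions_named hI'named hFmlL hment
      rw [hbase, List.mem_filterMap]
      exact ⟨x, mem_mentC hment, by rw [dif_pos ⟨hx, hxR⟩]⟩
    by_cases hex : ∃ x ∈ R' X, ¬ Fml.mentionsVal X x
    · obtain ⟨x0, hx0R, hx0m⟩ := hex
      refine ⟨base ++ [⟨x0, hR'sub X hx0R⟩], ?_, ?_, ?_⟩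
      · intro x hxl
        rcases List.mem_append.1 hxl with h | h
        · exact hbsub x h
        · simp only [List.mem_singleton] at h
          subst h; exact hx0R
      · intro x hx hment
        exact List.mem_append.2 (Or.inl (hbmem x hx hment))
      · intro _
        exact ⟨⟨x0, hR'sub X hx0R⟩, List.mem_append.2 (Or.inr (by simp)), hx0m⟩
    · refine ⟨base, hbsub, hbmem, ?_⟩
      intro h; exact absurd h hex
  -- the premise of D2⁺
  have hbig : ∀ (l₀ : List {x : S.Val // x ∈ S.RV X}), (∀ x ∈ l₀, x.1 ∈ R' X) →
      ProvableStar (starAxioms S W R' I' useD3 useD6p useD10a useD10b)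
        W R' {ψ' | ψ'.InLang W R' I'}
        (CForm.imp (CForm.bigAnd lC) (CForm.bigAnd (l₀.map fun x =>
          CForm.box I hI (Event.imp φ (Event.not (Event.prim X x.1 x.2)))))) := by
    intro l₀
    induction l₀ with
    | nil =>
        intro _
        refine prov_taut (fun val => ?_) ⟨hχL, trivial⟩
        simp [CForm.imp, CForm.evalB, CForm.bigAnd]
    | cons hd tl ih =>
        intro h₀
        have hh := hder hd.1 hd.2 (h₀ hd (List.mem_cons_self (a := hd) (l := tl)))
        have ht := ih fun x hx => h₀ x (List.mem_cons_of_mem _ hx)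
        set m := CForm.box I hI (Event.imp φ (Event.not (Event.prim X hd.1 hd.2))) with hm
        set T := CForm.bigAnd (tl.map fun x =>
          CForm.box I hI (Event.imp φ (Event.not (Event.prim X x.1 x.2)))) with hT
        have hcomb : (CForm.imp (CForm.imp (CForm.bigAnd lC) m)
            (CForm.imp (CForm.imp (CForm.bigAnd lC) T)
              (CForm.imp (CForm.bigAnd lC) (CForm.and m T)))).Taut := by
          intro val
          simp only [CForm.imp, CForm.evalB]
          cases hc : CForm.evalB val (CForm.bigAnd lC) <;>
            cases h₁ : CForm.evalB val m <;> cases h₂ : CForm.evalB val T <;> simp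
        have hmL : m.InLang W R' I' := ⟨hII', hφLang, hXW, h₀ hd (List.mem_cons_self (a := hd) (l := tl))⟩
        have hTL : T.InLang W R' I' := by
          rw [hT]
          refine inLang_bigAnd fun m' hm' => ?_
          rw [List.mem_map] at hm'
          obtain ⟨x, hxtl, rfl⟩ := hm'
          exact ⟨hII', hφLang, hXW, h₀ x (List.mem_cons_of_mem _ hxtl)⟩
        have hcombL : (CForm.imp (CForm.imp (CForm.bigAnd lC) m)
            (CForm.imp (CForm.imp (CForm.bigAnd lC) T)
              (CForm.imp (CForm.bigAnd lC) (CForm.and m T)))).InLang W R' I' :=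
          ⟨⟨hχL, hmL⟩, ⟨hχL, hTL⟩, hχL, hmL, hTL⟩
        have := ProvableStar.mp (ProvableStar.mp (prov_taut hcomb hcombL) hh) ht
        simpa [CForm.bigAnd, hm, hT] using this
  -- apply D2⁺
  have hLfinal : CForm.imp (CForm.bigAnd lC) (CForm.box I hI (Event.not φ)) ∈
      {ψ' : CForm S | ψ'.InLang W R' I'} := ⟨hχL, hII', hφLang⟩
  have hd2 := ProvableStar.d2plus (Ax := starAxioms S W R' I' useD3 useD6p useD10a useD10b)
    (φ := CForm.bigAnd lC) (I := I) (hI := hI) (ψ := φ) hXW l hsub hmem hfresh hLfinal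
    (hbig l hsub)
  -- final contradiction
  have Tf : (CForm.imp (CForm.imp (CForm.bigAnd lC) (CForm.box I hI (Event.not φ)))
      (CForm.not (CForm.bigAnd lC))).Taut := by
    intro val
    by_cases hc : CForm.evalB val (CForm.bigAnd lC) = true
    · have hdiaT : CForm.evalB val (CForm.dia I hI φ) = true :=
        (evalB_bigAnd val lC).1 hc _ ((hlC _).2 hdia)
      have hboxF : CForm.evalB val (CForm.box I hI (Event.not φ)) = false := by
        have : CForm.evalB val (CForm.not (CForm.box I hI (Event.not φ))) = true := hdiaT
        simp only [CForm.evalB, Bool.not_eq_true'] at this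
        exact this
      simp only [CForm.evalB] at hboxF
      simp [CForm.imp, CForm.evalB, hc, hboxF]
    · simp [CForm.imp, CForm.evalB, hc]
  have TfL : (CForm.imp (CForm.imp (CForm.bigAnd lC) (CForm.box I hI (Event.not φ)))
      (CForm.not (CForm.bigAnd lC))).InLang W R' I' := ⟨⟨hχL, hII', hφLang⟩, hχL⟩
  exact hCcons lC (fun m hm => (hlC m).1 hm)
    (ProvableStar.mp (prov_taut Tf TfL) hd2)

end Causal
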